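/- The function g(t) = -log(cos t)/t² is strictly increasing on (0, π/2). -/
import Mathlib

open Real Set

lemma aux_cos_pos {t : ℝ} (ht : t ∈ Set.Ico 0 (Real.pi/2)) : 0 < Real.cos t :=
  Real.cos_pos_of_mem_Ioo ⟨lt_of_lt_of_le (by linarith [Real.pi_pos]) ht.1, ht.2⟩

lemma aux1 : ∀ t ∈ Set.Ioo (0:ℝ) (Real.pi/2),
    0 < t * Real.tan t + 2 * Real.log (Real.cos t) := by
  have hmono : StrictMonoOn (fun t => t * Real.tan t + 2 * Real.log (Real.cos t))
      (Set.Ico 0 (Real.pi/2)) := by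
    apply strictMonoOn_of_deriv_pos (convex_Ico _ _)
    · intro x hx
      have hc : Real.cos x ≠ 0 := (aux_cos_pos hx).ne'
      exact (((continuousAt_id.mul (Real.continuousAt_tan.2 hc)).add
        (((Real.continuousAt_log hc).comp (Real.continuous_cos.continuousAt)).const_smul
          (2:ℝ))).continuousWithinAt)
    · intro x hx
      rw [interior_Ico] at hx
      have hcos : 0 < Real.cos x := aux_cos_pos ⟨le_of_lt hx.1, hx.2⟩
      have h1 : HasDerivAt (fun t : ℝ => t * Real.tan t)
          (1 * Real.tan x + x * (1 / Real.cos x ^ 2)) x :=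
        (hasDerivAt_id x).mul (Real.hasDerivAt_tan hcos.ne')
      have h2 : HasDerivAt (fun t : ℝ => Real.log (Real.cos t))
          ((Real.cos x)⁻¹ * (-Real.sin x)) x :=
        (Real.hasDerivAt_log hcos.ne').comp x (Real.hasDerivAt_cos x)
      have H : HasDerivAt (fun t : ℝ => t * Real.tan t + 2 * Real.log (Real.cos t))
          (1 * Real.tan x + x * (1 / Real.cos x ^ 2)
            + 2 * ((Real.cos x)⁻¹ * (-Real.sin x))) x := h1.add (h2.const_mul 2)
      rw [H.deriv]
      have hsinlt : Real.sin x * Real.cos x < x := by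
        have h3 : Real.sin x < x := Real.sin_lt hx.1
        have h4 : 0 < Real.sin x :=
          Real.sin_pos_of_pos_of_lt_pi hx.1 (by linarith [Real.pi_pos, hx.2])
        nlinarith [Real.cos_le_one x]
      have heq : 1 * Real.tan x + x * (1 / Real.cos x ^ 2)
            + 2 * ((Real.cos x)⁻¹ * (-Real.sin x))
          = (x - Real.sin x * Real.cos x) / Real.cos x ^ 2 := by
        rw [Real.tan_eq_sin_div_cos]; field_simp; ring
      rw [heq]
      exact div_pos (by linarith) (by positivity)
  intro t ht
  have h0 : (0:ℝ) ∈ Set.Ico (0:ℝ) (Real.pi/2) := ⟨le_refl 0, by linarith [Real.pi_pos]⟩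
  have := hmono h0 ⟨le_of_lt ht.1, ht.2⟩ ht.1
  simpa using this

theorem stmt_17 :
    StrictMonoOn (fun t : ℝ => -Real.log (Real.cos t) / t^2) (Set.Ioo 0 (Real.pi/2)) := by
  apply strictMonoOn_of_deriv_pos (convex_Ioo _ _)
  · intro x hx
    have hcos : 0 < Real.cos x := aux_cos_pos ⟨le_of_lt hx.1, hx.2⟩
    have hx0 : (0:ℝ) < x := hx.1
    have hx2 : x ^ 2 ≠ 0 := by positivity
    exact ((((Real.continuousAt_log hcos.ne').comp
      Real.continuous_cos.continuousAt).neg.div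
      (continuousAt_pow x 2) hx2).continuousWithinAt)
  · intro x hx
    rw [interior_Ioo] at hx
    have hcos : 0 < Real.cos x := aux_cos_pos ⟨le_of_lt hx.1, hx.2⟩
    have hx0 : (0:ℝ) < x := hx.1
    have hx2 : x ^ 2 ≠ 0 := by positivity
    have hf : HasDerivAt (fun t : ℝ => -Real.log (Real.cos t))
        (-((Real.cos x)⁻¹ * (-Real.sin x))) x :=
      ((Real.hasDerivAt_log hcos.ne').comp x (Real.hasDerivAt_cos x)).neg
    have hg : HasDerivAt (fun t : ℝ => t ^ 2) (2 * x ^ 1) x := hasDerivAt_pow 2 x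
    have H : HasDerivAt (fun t : ℝ => -Real.log (Real.cos t) / t ^ 2)
        ((-((Real.cos x)⁻¹ * (-Real.sin x)) * x ^ 2
          - -Real.log (Real.cos x) * (2 * x ^ 1)) / (x ^ 2) ^ 2) x := hf.div hg hx2
    rw [H.deriv]
    have hpos := aux1 x hx
    have heq : (-((Real.cos x)⁻¹ * (-Real.sin x)) * x ^ 2
          - -Real.log (Real.cos x) * (2 * x ^ 1)) / (x ^ 2) ^ 2
        = (x * Real.tan x + 2 * Real.log (Real.cos x)) / x ^ 3 := by
      rw [Real.tan_eq_sin_div_cos]; field_simp; ring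
    rw [heq]
    exact div_pos hpos (by positivity)
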